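/- Let M be an injective left R-module which is not Σ-injective. Then there exists a finitely injective submodule of E(M^(ℵ₀)) which is not a direct sum of injective modules. -/

import Mathlib

open DirectSum

/-- A module `M` is finitely injective if every finite subset of `M` is contained in an
injective submodule of `M`. -/
def FinitelyInjective (R : Type*) [Ring R] (M : Type*) [AddCommGroup M] [Module R M] : Prop :=
  ∀ s : Finset M, ∃ N : Submodule R M, Module.Injective R N ∧ ∀ x ∈ s, x ∈ N

/-- An injective module `M` is `Σ`-injective if every direct sum of copies of `M`
is injective. -/
def SigmaInjective (R : Type u) [Ring R] (M : Type v) [AddCommGroup M] [Module R M] : Prop :=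
  ∀ ι : Type v, Module.Injective R (⨁ _ : ι, M)

/-- A module is a direct sum of injective modules if it is the internal direct sum of a
family of injective submodules. -/
def IsDirectSumOfInjectives (R : Type u) [Ring R] (M : Type v) [AddCommGroup M]
    [Module R M] : Prop :=
  ∃ (ι : Type v) (_ : DecidableEq ι) (p : ι → Submodule R M),
    (∀ i, Module.Injective R (p i)) ∧ DirectSum.IsInternal p

universe u v




section CE

variable {R : Type u} [Ring R]

theorem injective_of_subsingleton {Q : Type v} [AddCommGroup Q] [Module R Q] [Subsingleton Q] :
    Module.Injective R Q where
  out X Y _ _ _ _ f _ g := ⟨0, fun x => Subsingleton.elim _ _⟩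

theorem injective_of_equiv {Q₁ Q₂ : Type v} [AddCommGroup Q₁] [Module R Q₁] [AddCommGroup Q₂]
    [Module R Q₂] (e : Q₁ ≃ₗ[R] Q₂) (h : Module.Injective R Q₁) : Module.Injective R Q₂ where
  out X Y _ _ _ _ f hf g := by
    obtain ⟨h', hh⟩ := h.out f hf (e.symm.toLinearMap ∘ₗ g)
    refine ⟨e.toLinearMap ∘ₗ h', fun x => ?_⟩
    have := hh x
    simp only [LinearMap.coe_comp, Function.comp_apply, LinearEquiv.coe_coe] at this ⊢
    rw [this, e.apply_symm_apply]

/-- Extension property along inclusions into cyclic modules. -/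
def CycExt (R : Type u) [Ring R] (Q : Type v) [AddCommGroup Q] [Module R Q] : Prop :=
  ∀ (Y : Type v) (_I1 : AddCommGroup Y), ∀ (_I2 : @Module R Y _ _I1.toAddCommMonoid),
    ∀ (y : Y) (W : @Submodule R Y _ _ _I2) (hW : W ≤ (@Submodule.span R Y _ _ _I2 {y}))
      (η : W →ₗ[R] Q),
    ∃ β : ↥(@Submodule.span R Y _ _ _I2 {y}) →ₗ[R] Q,
      ∀ (w : Y) (hw : w ∈ W), β ⟨w, hW hw⟩ = η ⟨w, hw⟩

section CEproof

variable {Q : Type v} [AddCommGroup Q] [Module R Q]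
variable {X N : Type v} [AddCommGroup X] [AddCommGroup N] [Module R X] [Module R N]
variable (i : X →ₗ[R] N) (f : X →ₗ[R] Q) [Fact (Function.Injective i)]

open Module.Baer

/-- Analogue of `Module.Baer.ExtensionOfMaxAdjoin.extensionToFun` with an abstract `φ`. -/
noncomputable def ceExtensionToFun {y : N} (φ : R →ₗ[R] Q) :
    supExtensionOfMaxSingleton i f y → Q := fun x =>
  (extensionOfMax i f).toLinearPMap (ExtensionOfMaxAdjoin.fst i x) +
    φ (ExtensionOfMaxAdjoin.snd i x)

theorem ceExtensionToFun_wd {y : N} (φ : R →ₗ[R] Q)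
    (hφ : ∀ (r : R) (mem : r • y ∈ (extensionOfMax i f).domain),
      φ r = (extensionOfMax i f).toLinearPMap ⟨r • y, mem⟩)
    (x : supExtensionOfMaxSingleton i f y) (a : (extensionOfMax i f).domain)
    (r : R) (eq1 : ↑x = ↑a + r • y) :
    ceExtensionToFun i f φ x = (extensionOfMax i f).toLinearPMap a + φ r := by
  cases' a with a ha
  have eq2 :
      (ExtensionOfMaxAdjoin.fst i x - a : N) = (r - ExtensionOfMaxAdjoin.snd i x) • y := by
    change ↑x = a + r • y at eq1
    rwa [ExtensionOfMaxAdjoin.eqn, ← sub_eq_zero, ← sub_sub_sub_eq, sub_eq_zero, ← sub_smul]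
      at eq1
  have mem3 : (r - ExtensionOfMaxAdjoin.snd i x) • y ∈ (extensionOfMax i f).domain := by
    rw [← eq2]; exact Submodule.sub_mem _ (ExtensionOfMaxAdjoin.fst i x).2 ha
  have eq3 := hφ (r - ExtensionOfMaxAdjoin.snd i x) mem3
  simp only [map_sub, sub_smul, sub_eq_iff_eq_add] at eq3
  unfold ceExtensionToFun
  rw [eq3, ← add_assoc, ← (extensionOfMax i f).toLinearPMap.map_add, AddMemClass.mk_add_mk]
  congr
  ext
  dsimp
  rw [Subtype.coe_mk, add_sub, ← eq1]
  exact eq_sub_of_add_eq (ExtensionOfMaxAdjoin.eqn i x).symm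

/-- Analogue of `Module.Baer.extensionOfMaxAdjoin`. -/
noncomputable def ceExtensionOfMaxAdjoin (y : N) (φ : R →ₗ[R] Q)
    (hφ : ∀ (r : R) (mem : r • y ∈ (extensionOfMax i f).domain),
      φ r = (extensionOfMax i f).toLinearPMap ⟨r • y, mem⟩) :
    ExtensionOf i f where
  domain := supExtensionOfMaxSingleton i f y
  le := le_trans (extensionOfMax i f).le le_sup_left
  toFun :=
    { toFun := ceExtensionToFun i f φ
      map_add' := fun a b => by
        have eq1 :
          ↑a + ↑b =
            ↑(ExtensionOfMaxAdjoin.fst i a + ExtensionOfMaxAdjoin.fst i b) +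
              (ExtensionOfMaxAdjoin.snd i a + ExtensionOfMaxAdjoin.snd i b) • y := by
          rw [ExtensionOfMaxAdjoin.eqn, ExtensionOfMaxAdjoin.eqn, add_smul, Submodule.coe_add]
          ac_rfl
        rw [ceExtensionToFun_wd i f φ hφ (a + b) _ _ eq1, LinearPMap.map_add, map_add]
        unfold ceExtensionToFun
        abel
      map_smul' := fun r a => by
        dsimp
        have eq1 :
          r • (a : N) =
            ↑(r • ExtensionOfMaxAdjoin.fst i a) + (r • ExtensionOfMaxAdjoin.snd i a) • y := by
          rw [ExtensionOfMaxAdjoin.eqn, smul_add, smul_eq_mul, mul_smul]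
          rfl
        rw [ceExtensionToFun_wd i f φ hφ (r • a :) _ _ eq1, LinearMap.map_smul,
          LinearPMap.map_smul, ← smul_add]
        congr }
  is_extension m := by
    dsimp
    rw [(extensionOfMax i f).is_extension,
      ceExtensionToFun_wd i f φ hφ _ ⟨i m, _⟩ 0 (by simp), map_zero, add_zero]

theorem ceExtensionOfMax_le (y : N) (φ : R →ₗ[R] Q)
    (hφ : ∀ (r : R) (mem : r • y ∈ (extensionOfMax i f).domain),
      φ r = (extensionOfMax i f).toLinearPMap ⟨r • y, mem⟩) :
    extensionOfMax i f ≤ ceExtensionOfMaxAdjoin i f y φ hφ :=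
  ⟨le_sup_left, fun x x' EQ => by
    symm
    change ceExtensionToFun i f φ _ = _
    rw [ceExtensionToFun_wd i f φ hφ x' x 0 (by simp [EQ]), map_zero, add_zero]⟩

end CEproof

theorem CycExt.injective {Q : Type v} [AddCommGroup Q] [Module R Q]
    (hce : CycExt R Q) : Module.Injective R Q where
  out X Y _ _ _ _ i hi f := by
    haveI : Fact (Function.Injective i) := ⟨hi⟩
    have htop : (Module.Baer.extensionOfMax i f).domain = ⊤ := by
      refine Submodule.eq_top_iff'.mpr fun y => ?_
      -- construct φ for this y from the cyclic extension property
      set D := (Module.Baer.extensionOfMax i f).domain with hD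
      set W : Submodule R Y := D ⊓ (Submodule.span R {y}) with hWdef
      have hW : W ≤ Submodule.span R {y} := inf_le_right
      set η : W →ₗ[R] Q :=
        (Module.Baer.extensionOfMax i f).toLinearPMap.toFun.comp
          (Submodule.inclusion (inf_le_left : W ≤ D)) with hη
      obtain ⟨β, hβ⟩ := hce Y _ _ y W hW η
      set φ : R →ₗ[R] Q :=
        β.comp ((LinearMap.toSpanSingleton R Y y).codRestrict (Submodule.span R {y})
          (fun r => Submodule.smul_mem _ r (Submodule.mem_span_singleton_self y))) with hφdef
      have hφ : ∀ (r : R) (mem : r • y ∈ (Module.Baer.extensionOfMax i f).domain),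
          φ r = (Module.Baer.extensionOfMax i f).toLinearPMap ⟨r • y, mem⟩ := by
        intro r mem
        have hmemW : r • y ∈ W := ⟨mem, Submodule.smul_mem _ r (Submodule.mem_span_singleton_self y)⟩
        have : φ r = β ⟨r • y, hW hmemW⟩ := by
          simp only [hφdef, LinearMap.comp_apply]
          congr 1
        rw [this, hβ _ hmemW]
        simp only [hη, LinearMap.comp_apply]
        rfl
      show y ∈ D
      rw [hD, ← Module.Baer.extensionOfMax_is_max i f _ (ceExtensionOfMax_le i f y φ hφ)]
      change y ∈ Module.Baer.supExtensionOfMaxSingleton i f y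
      rw [Submodule.mem_sup]
      exact ⟨0, Submodule.zero_mem _, y, Submodule.mem_span_singleton_self _, zero_add _⟩
    refine ⟨{ toFun := fun y => (Module.Baer.extensionOfMax i f).toLinearPMap
                ⟨y, htop.symm ▸ Submodule.mem_top⟩
              map_add' := fun x y => by rw [← LinearPMap.map_add]; congr
              map_smul' := fun r x => by rw [← LinearPMap.map_smul]; dsimp }, fun x => ?_⟩
    exact ((Module.Baer.extensionOfMax i f).is_extension x).symm

end CE

section Sigma

variable {R : Type u} [Ring R] {M : Type v} [AddCommGroup M] [Module R M]

private theorem comp_lof_ne {ι' : Type*} [DecidableEq ι'] {i j : ι'} (h : j ≠ i) (m : M) :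
    DirectSum.component R ι' (fun _ => M) i (DirectSum.lof R ι' (fun _ => M) j m) = 0 := by
  rw [DirectSum.component.of, dif_neg h]

private theorem ds_repr [DecidableEq ι'] (F' : Finset ι') (x : ⨁ _ : ι', M)
    (hx : ∀ i ∉ F', DirectSum.component R ι' (fun _ => M) i x = 0) :
    x = ∑ i ∈ F', DirectSum.lof R ι' (fun _ => M) i
      (DirectSum.component R ι' (fun _ => M) i x) := by
  refine DirectSum.ext_component R fun j => ?_
  rw [map_sum]
  by_cases hj : j ∈ F'
  · rw [Finset.sum_eq_single j]
    · rw [DirectSum.component.lof_self]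
    · intro i _ hij
      exact comp_lof_ne hij _
    · intro h; exact absurd hj h
  · rw [hx j hj, Finset.sum_eq_zero]
    intro i hi
    refine comp_lof_ne (fun h => hj (by rw [← h]; exact hi)) _

/-- If `M` and `⨁ _ : ℕ, M` are injective, then any direct sum of copies of `M` is injective. -/
theorem sigmaInjective_of_countable
    (hM : Module.Injective R M) (hNat : Module.Injective R (⨁ _ : ℕ, M)) :
    ∀ ι : Type v, Module.Injective R (⨁ _ : ι, M) := by
  classical
  intro ι
  apply CycExt.injective
  intro Y _I1 _I2 y W hW η
  have hinclinj : Function.Injective (Submodule.inclusion hW) :=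
    Submodule.inclusion_injective hW
  by_cases hT : {i : ι | (DirectSum.component R ι (fun _ => M) i) ∘ₗ η ≠ 0}.Infinite
  · exfalso
    set T := {i : ι | (DirectSum.component R ι (fun _ => M) i) ∘ₗ η ≠ 0} with hTdef
    obtain e := hT.natEmbedding
    set g : ι → (M →ₗ[R] (⨁ _ : ℕ, M)) := fun i =>
      if h : ∃ k : ℕ, ((e k : ↥T) : ι) = i then DirectSum.lof R ℕ (fun _ => M) h.choose else 0
      with hgdef
    set F : (⨁ _ : ι, M) →ₗ[R] (⨁ _ : ℕ, M) := DirectSum.toModule R ι _ g with hFdef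
    have hFcomp : ∀ k : ℕ, (DirectSum.component R ℕ (fun _ => M) k) ∘ₗ F
        = DirectSum.component R ι (fun _ => M) ((e k : ↥T) : ι) := by
      intro k
      refine DirectSum.linearMap_ext _ fun j => ?_
      ext m
      simp only [LinearMap.coe_comp, Function.comp_apply, hFdef, DirectSum.toModule_lof]
      by_cases hj : ((e k : ↥T) : ι) = j
      · subst hj
        have hex : ∃ k' : ℕ, ((e k' : ↥T) : ι) = ((e k : ↥T) : ι) := ⟨k, rfl⟩
        have hck : hex.choose = k := by
          have h := hex.choose_spec
          exact e.injective (Subtype.ext h)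
        have h1 : (g ((e k : ↥T) : ι)) m = DirectSum.lof R ℕ (fun _ => M) k m := by
          simp only [hgdef, dif_pos hex, hck]
        rw [h1, DirectSum.component.lof_self, DirectSum.component.lof_self]
      · rw [comp_lof_ne (fun h => hj h.symm)]
        by_cases hj2 : ∃ k' : ℕ, ((e k' : ↥T) : ι) = j
        · have hspec := hj2.choose_spec
          have hne : ¬ (hj2.choose = k) := by
            intro hc
            exact hj (hc ▸ hspec)
          have h1 : (g j) m = DirectSum.lof R ℕ (fun _ => M) hj2.choose m := by
            simp only [hgdef, dif_pos hj2]
          rw [h1, comp_lof_ne hne]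
        · have h1 : (g j) m = 0 := by simp only [hgdef, dif_neg hj2, LinearMap.zero_apply]
          rw [h1, map_zero]
    obtain ⟨θhat, hθhat⟩ := hNat.out (Submodule.inclusion hW) hinclinj (F ∘ₗ η)
    set c := θhat ⟨y, Submodule.mem_span_singleton_self y⟩ with hc
    obtain ⟨k₀, hk₀⟩ := Infinite.exists_notMem_finset (DFinsupp.support c)
    have hk₀T : (DirectSum.component R ι (fun _ => M) ((e k₀ : ↥T) : ι)) ∘ₗ η ≠ 0 := (e k₀).2
    apply hk₀T
    ext w
    simp only [LinearMap.coe_comp, Function.comp_apply, LinearMap.zero_apply]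
    obtain ⟨r, hr⟩ := Submodule.mem_span_singleton.mp (hW w.2)
    have hwr : (Submodule.inclusion hW) w
        = r • (⟨y, Submodule.mem_span_singleton_self y⟩ : ↥(Submodule.span R {y})) := by
      apply Subtype.ext
      simpa using hr.symm
    have h1 : F (η w) = r • c := by
      have h := hθhat w
      simp only [LinearMap.coe_comp, Function.comp_apply] at h
      rw [← h, hwr, map_smul]
    have h2 : DirectSum.component R ℕ (fun _ => M) k₀ (F (η w)) = 0 := by
      rw [h1, map_smul]
      have hz : DirectSum.component R ℕ (fun _ => M) k₀ c = 0 :=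
        DFinsupp.notMem_support_iff.mp hk₀
      rw [hz, smul_zero]
    have h3 := LinearMap.congr_fun (hFcomp k₀) (η w)
    simp only [LinearMap.coe_comp, Function.comp_apply] at h3
    rw [← h3, h2]
  · rw [Set.not_infinite] at hT
    have hb : ∀ i : ι, ∃ bi : ↥(Submodule.span R {y}) →ₗ[R] M,
        ∀ w : ↥W, bi (Submodule.inclusion hW w)
          = DirectSum.component R ι (fun _ => M) i (η w) := by
      intro i
      obtain ⟨bi, hbi⟩ := hM.out (Submodule.inclusion hW) hinclinj
        ((DirectSum.component R ι (fun _ => M) i) ∘ₗ η)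
      exact ⟨bi, fun w => hbi w⟩
    choose b hbspec using hb
    refine ⟨∑ i ∈ hT.toFinset, (DirectSum.lof R ι (fun _ => M) i) ∘ₗ (b i), fun w hw => ?_⟩
    have hsupp : ∀ i ∉ hT.toFinset,
        DirectSum.component R ι (fun _ => M) i (η ⟨w, hw⟩) = 0 := by
      intro i hi
      rw [Set.Finite.mem_toFinset] at hi
      have : (DirectSum.component R ι (fun _ => M) i) ∘ₗ η = 0 := not_not.mp hi
      simpa using LinearMap.congr_fun this ⟨w, hw⟩
    rw [LinearMap.sum_apply]
    calc ∑ i ∈ hT.toFinset, ((DirectSum.lof R ι (fun _ => M) i) ∘ₗ (b i)) ⟨w, hW hw⟩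
        = ∑ i ∈ hT.toFinset, DirectSum.lof R ι (fun _ => M) i
            (DirectSum.component R ι (fun _ => M) i (η ⟨w, hw⟩)) := by
          refine Finset.sum_congr rfl fun i _ => ?_
          simp only [LinearMap.coe_comp, Function.comp_apply]
          congr 1
          have h := hbspec i ⟨w, hw⟩
          rw [← h]
          rfl
      _ = η ⟨w, hw⟩ := (ds_repr hT.toFinset _ hsupp).symm

end Sigma

section Ambient

variable {R : Type u} [Ring R] {Q : Type v} [AddCommGroup Q] [Module R Q]

/-- `X` is essential in `Z` (both submodules of the ambient module `Q`). -/
def Ess (X Z : Submodule R Q) : Prop :=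
  X ≤ Z ∧ ∀ z ∈ Z, z ≠ 0 → ∃ r : R, r • z ∈ X ∧ r • z ≠ 0

theorem Ess.le {X Z : Submodule R Q} (h : Ess X Z) : X ≤ Z := h.1

theorem Ess.refl (X : Submodule R Q) : Ess X X :=
  ⟨le_rfl, fun z hz h0 => ⟨1, by simpa using hz, by simpa using h0⟩⟩

theorem Ess.trans {X Y Z : Submodule R Q} (h1 : Ess X Y) (h2 : Ess Y Z) : Ess X Z := by
  refine ⟨h1.1.trans h2.1, fun z hz h0 => ?_⟩
  obtain ⟨r, hr1, hr2⟩ := h2.2 z hz h0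
  obtain ⟨s, hs1, hs2⟩ := h1.2 _ hr1 hr2
  exact ⟨s * r, by rwa [mul_smul], by rwa [mul_smul]⟩

theorem Ess.disj {X Z V : Submodule R Q} (h : Ess X Z) (hV : V ≤ Z) (hd : V ⊓ X = ⊥) : V = ⊥ := by
  rw [eq_bot_iff]
  intro v hv
  rw [Submodule.mem_bot]
  by_contra h0
  obtain ⟨r, hr1, hr2⟩ := h.2 v (hV hv) h0
  exact hr2 (by simpa using (hd ▸ Submodule.mem_inf.mpr ⟨Submodule.smul_mem V r hv, hr1⟩ :
    r • v ∈ (⊥ : Submodule R Q)))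

/-- Upper bound of a nonempty chain of submodules with pointwise membership control. -/
theorem chain_ub {s : Set (Submodule R Q)} (hchain : IsChain (· ≤ ·) s) (hne : s.Nonempty) :
    ∃ U : Submodule R Q, (∀ N ∈ s, N ≤ U) ∧ ∀ x ∈ U, ∃ N ∈ s, x ∈ N := by
  obtain ⟨N₀, hN₀⟩ := hne
  refine ⟨{  carrier := ⋃ N ∈ s, (N : Set Q)
             zero_mem' := Set.mem_biUnion hN₀ (Submodule.zero_mem N₀)
             add_mem' := ?_
             smul_mem' := ?_ }, ?_, ?_⟩
  · rintro a b ha hb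
    obtain ⟨Na, hNas, haN⟩ := Set.mem_iUnion₂.mp ha
    obtain ⟨Nb, hNbs, hbN⟩ := Set.mem_iUnion₂.mp hb
    rcases hchain.total hNas hNbs with h | h
    · exact Set.mem_biUnion hNbs (Submodule.add_mem Nb (h haN) hbN)
    · exact Set.mem_biUnion hNas (Submodule.add_mem Na haN (h hbN))
  · rintro r a ha
    obtain ⟨Na, hNas, haN⟩ := Set.mem_iUnion₂.mp ha
    exact Set.mem_biUnion hNas (Submodule.smul_mem Na r haN)
  · intro N hN x hx
    exact Set.mem_biUnion hN hx
  · intro x hx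
    obtain ⟨N, hNs, hxN⟩ := Set.mem_iUnion₂.mp hx
    exact ⟨N, hNs, hxN⟩

/-- Existence of a maximal essential extension of `X` inside `Q`. -/
theorem exists_maxEss (X : Submodule R Q) :
    ∃ H : Submodule R Q, Ess X H ∧ ∀ Z, H ≤ Z → Ess H Z → Z = H := by
  have hch : ∀ c ⊆ {Z : Submodule R Q | Ess X Z}, IsChain (· ≤ ·) c → ∀ y ∈ c,
      ∃ ub ∈ {Z : Submodule R Q | Ess X Z}, ∀ z ∈ c, z ≤ ub := by
    intro c hcs hchain y hy
    obtain ⟨U, hub, hmem⟩ := chain_ub hchain ⟨y, hy⟩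
    refine ⟨U, ⟨(hcs hy).1.trans (hub y hy), fun z hz h0 => ?_⟩, hub⟩
    obtain ⟨N, hNs, hzN⟩ := hmem z hz
    exact (hcs hNs).2 z hzN h0
  obtain ⟨H, -, hmax⟩ := zorn_le_nonempty₀ {Z : Submodule R Q | Ess X Z} hch X (Ess.refl X)
  refine ⟨H, hmax.prop, fun Z hHZ hess => ?_⟩
  exact le_antisymm (hmax.le_of_ge ((hmax.prop).trans hess) hHZ) hHZ

/-- Existence of a maximal submodule disjoint from `H` containing a given `W₀`. -/
theorem exists_maxDisjoint (H W₀ : Submodule R Q) (h0 : H ⊓ W₀ = ⊥) :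
    ∃ D : Submodule R Q, W₀ ≤ D ∧ H ⊓ D = ⊥ ∧ ∀ V, D ≤ V → H ⊓ V = ⊥ → V = D := by
  have hch : ∀ c ⊆ {Z : Submodule R Q | H ⊓ Z = ⊥}, IsChain (· ≤ ·) c → ∀ y ∈ c,
      ∃ ub ∈ {Z : Submodule R Q | H ⊓ Z = ⊥}, ∀ z ∈ c, z ≤ ub := by
    intro c hcs hchain y hy
    obtain ⟨U, hub, hmem⟩ := chain_ub hchain ⟨y, hy⟩
    refine ⟨U, ?_, hub⟩
    rw [Set.mem_setOf_eq, eq_bot_iff]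
    intro x hx
    obtain ⟨N, hNs, hxN⟩ := hmem x (Submodule.mem_inf.mp hx).2
    have hxHN : x ∈ H ⊓ N := Submodule.mem_inf.mpr ⟨(Submodule.mem_inf.mp hx).1, hxN⟩
    rw [hcs hNs] at hxHN
    exact hxHN
  obtain ⟨D, hWD, hmax⟩ := zorn_le_nonempty₀ {Z : Submodule R Q | H ⊓ Z = ⊥} hch W₀ h0
  refine ⟨D, hWD, hmax.prop, fun V hDV hHV => ?_⟩
  exact le_antisymm (hmax.le_of_ge hHV hDV) hDV

/-- A submodule with no proper essential extension inside an injective module is a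
direct summand (with any prescribed maximal disjoint complement). -/
theorem closure_isCompl (hQ : Module.Injective R Q) (H D : Submodule R Q)
    (hclos : ∀ Z, H ≤ Z → Ess H Z → Z = H)
    (hHD : H ⊓ D = ⊥)
    (hDmax : ∀ V, D ≤ V → H ⊓ V = ⊥ → V = D) :
    IsCompl H D := by
  set ρ : Q →ₗ[R] Q ⧸ D := D.mkQ with hρ
  have hesst : ∀ V' : Submodule R (Q ⧸ D), V' ⊓ H.map ρ = ⊥ → V' = ⊥ := by
    intro V' hd
    have hDle : D ≤ V'.comap ρ := by
      intro d hd'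
      have : ρ d = 0 := (Submodule.Quotient.mk_eq_zero D).mpr hd'
      simp [Submodule.mem_comap, this]
    have hHV : H ⊓ V'.comap ρ = ⊥ := by
      rw [eq_bot_iff]
      intro x hx
      obtain ⟨hxH, hxV⟩ := Submodule.mem_inf.mp hx
      have h1 : ρ x ∈ V' ⊓ H.map ρ :=
        Submodule.mem_inf.mpr ⟨hxV, Submodule.mem_map_of_mem hxH⟩
      rw [hd, Submodule.mem_bot] at h1
      have h2 : x ∈ D := (Submodule.Quotient.mk_eq_zero D).mp h1
      have := hHD ▸ Submodule.mem_inf.mpr ⟨hxH, h2⟩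
      exact this
    have hVD : V'.comap ρ = D := hDmax _ hDle hHV
    have hsurj : Function.Surjective ρ := Submodule.mkQ_surjective D
    have : V' = (V'.comap ρ).map ρ := (Submodule.map_comap_eq_of_surjective hsurj V').symm
    rw [this, hVD, eq_bot_iff]
    intro y hy
    obtain ⟨d, hdD, rfl⟩ := hy
    rw [Submodule.mem_bot]
    exact (Submodule.Quotient.mk_eq_zero D).mpr hdD
  set σ : ↥H →ₗ[R] Q ⧸ D := ρ ∘ₗ H.subtype with hσdef
  have hσ : Function.Injective σ := by
    intro a b hab
    have h1 : ρ ((a : Q) - b) = 0 := by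
      simp only [map_sub]
      rw [show ρ ↑a = σ a from rfl, show ρ ↑b = σ b from rfl, hab, sub_self]
    have h2 : ((a : Q) - b) ∈ D := (Submodule.Quotient.mk_eq_zero D).mp h1
    have h3 : ((a : Q) - b) ∈ H := Submodule.sub_mem H a.2 b.2
    have h4 := hHD ▸ Submodule.mem_inf.mpr ⟨h3, h2⟩
    rw [Submodule.mem_bot, sub_eq_zero] at h4
    exact Subtype.ext h4
  obtain ⟨φ, hφ⟩ := hQ.out σ hσ H.subtype
  have hrangeσ : H.map ρ = LinearMap.range σ := by
    rw [hσdef, LinearMap.range_comp, Submodule.range_subtype]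
  have hkerφ : LinearMap.ker φ = ⊥ := by
    apply hesst
    rw [eq_bot_iff]
    intro z hz
    obtain ⟨hz1, hz2⟩ := Submodule.mem_inf.mp hz
    rw [hrangeσ] at hz2
    obtain ⟨h, rfl⟩ := hz2
    have : (h : Q) = 0 := by
      have := hφ h
      rw [LinearMap.mem_ker] at hz1
      rw [hz1] at this
      exact this.symm
    rw [Submodule.mem_bot, show h = 0 from Subtype.ext this, map_zero]
  have φinj : Function.Injective φ := LinearMap.ker_eq_bot.mp hkerφ
  have hHle : H ≤ LinearMap.range φ := by
    intro x hx
    exact ⟨σ ⟨x, hx⟩, hφ ⟨x, hx⟩⟩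
  have hEssH : Ess H (LinearMap.range φ) := by
    refine ⟨hHle, fun q hq h0 => ?_⟩
    obtain ⟨ξ, rfl⟩ := hq
    have hξ0 : ξ ≠ 0 := fun h => h0 (by rw [h, map_zero])
    have hne : (Submodule.span R {ξ}) ⊓ H.map ρ ≠ ⊥ := by
      intro hbot
      exact hξ0 (by simpa using (hesst _ hbot ▸ Submodule.mem_span_singleton_self ξ :
        ξ ∈ (⊥ : Submodule R (Q ⧸ D))))
    obtain ⟨z, hzmem, hz0⟩ := Submodule.exists_mem_ne_zero_of_ne_bot hne
    obtain ⟨hz1, hz2⟩ := Submodule.mem_inf.mp hzmem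
    obtain ⟨r, rfl⟩ := Submodule.mem_span_singleton.mp hz1
    rw [hrangeσ] at hz2
    obtain ⟨h, hh⟩ := hz2
    refine ⟨r, ?_, ?_⟩
    · have : r • φ ξ = φ (r • ξ) := (map_smul φ r ξ).symm
      rw [this, ← hh, hφ h]
      exact h.2
    · intro hcon
      have : φ (r • ξ) = 0 := by rw [map_smul, hcon]
      have : r • ξ ∈ LinearMap.ker φ := LinearMap.mem_ker.mpr this
      rw [hkerφ, Submodule.mem_bot] at this
      exact hz0 this
  have hrangeH : LinearMap.range φ = H := hclos _ hHle hEssH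
  have hsup : H ⊔ D = ⊤ := by
    rw [eq_top_iff]
    intro q _
    have h1 : φ (ρ q) ∈ H := hrangeH ▸ LinearMap.mem_range_self φ (ρ q)
    have h2 : φ (σ ⟨φ (ρ q), h1⟩) = φ (ρ q) := hφ ⟨φ (ρ q), h1⟩
    have h3 : σ ⟨φ (ρ q), h1⟩ = ρ q := φinj h2
    have h4 : ρ (q - φ (ρ q)) = 0 := by
      rw [map_sub, show ρ (φ (ρ q)) = σ ⟨φ (ρ q), h1⟩ from rfl, h3, sub_self]
    have h5 : q - φ (ρ q) ∈ D := (Submodule.Quotient.mk_eq_zero D).mp h4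
    exact Submodule.mem_sup.mpr ⟨φ (ρ q), h1, q - φ (ρ q), h5, by abel⟩
  exact ⟨disjoint_iff.mpr hHD, codisjoint_iff.mpr hsup⟩

theorem injective_of_isCompl (hQ : Module.Injective R Q) {p q' : Submodule R Q}
    (h : IsCompl p q') : Module.Injective R ↥p where
  out X Y _ _ _ _ f hf g := by
    obtain ⟨hh, hhh⟩ := hQ.out f hf (p.subtype ∘ₗ g)
    refine ⟨(p.linearProjOfIsCompl q' h) ∘ₗ hh, fun x => ?_⟩
    simp only [LinearMap.coe_comp, Function.comp_apply]
    rw [hhh x]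
    exact Submodule.linearProjOfIsCompl_apply_left h (g x)

theorem isCompl_comap {U V W : Submodule R Q} (hUV : U ⊓ V = ⊥) (hW : U ⊔ V = W) :
    IsCompl (U.comap W.subtype) (V.comap W.subtype) := by
  have hUW : U ≤ W := hW ▸ le_sup_left
  have hVW : V ≤ W := hW ▸ le_sup_right
  constructor
  · rw [disjoint_iff, eq_bot_iff]
    intro x hx
    obtain ⟨h1, h2⟩ := Submodule.mem_inf.mp hx
    have : (x : Q) ∈ U ⊓ V := Submodule.mem_inf.mpr ⟨h1, h2⟩
    rw [hUV, Submodule.mem_bot] at this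
    rw [Submodule.mem_bot]
    exact Subtype.ext this
  · rw [codisjoint_iff, eq_top_iff]
    rintro ⟨z, hz⟩ -
    have : z ∈ U ⊔ V := hW ▸ hz
    obtain ⟨u, hu, v, hv, huv⟩ := Submodule.mem_sup.mp this
    refine Submodule.mem_sup.mpr ⟨⟨u, hUW hu⟩, hu, ⟨v, hVW hv⟩, hv, ?_⟩
    exact Subtype.ext huv

theorem injective_sup' {U V : Submodule R Q} (hU : Module.Injective R ↥U)
    (hV : Module.Injective R ↥V) (hUV : U ⊓ V = ⊥) :
    Module.Injective R ↥(U ⊔ V) := by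
  have hc := isCompl_comap hUV (rfl : U ⊔ V = U ⊔ V)
  have hU' : Module.Injective R ↥(U.comap (U ⊔ V).subtype) :=
    injective_of_equiv (Submodule.comapSubtypeEquivOfLe (le_sup_left : U ≤ U ⊔ V)).symm hU
  have hV' : Module.Injective R ↥(V.comap (U ⊔ V).subtype) :=
    injective_of_equiv (Submodule.comapSubtypeEquivOfLe (le_sup_right : V ≤ U ⊔ V)).symm hV
  constructor
  intro X Y _ _ _ _ f hf g
  obtain ⟨g1, hg1⟩ := hU'.out f hf (((U.comap (U ⊔ V).subtype).linearProjOfIsCompl _ hc) ∘ₗ g)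
  obtain ⟨g2, hg2⟩ := hV'.out f hf
    (((V.comap (U ⊔ V).subtype).linearProjOfIsCompl _ hc.symm) ∘ₗ g)
  refine ⟨(U.comap (U ⊔ V).subtype).subtype ∘ₗ g1 + (V.comap (U ⊔ V).subtype).subtype ∘ₗ g2,
    fun x => ?_⟩
  simp only [LinearMap.add_apply, LinearMap.coe_comp, Function.comp_apply]
  rw [hg1 x, hg2 x]
  simp only [LinearMap.coe_comp, Function.comp_apply]
  exact Subtype.ext (by
    simpa [Submodule.linearProjOfIsCompl] using congrArg Subtype.val
      (Submodule.projection_add_projection_eq_self hc (g x)))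

theorem injective_biSup_finset {ι' : Type*} (P : ι' → Submodule R Q)
    (hP : ∀ i, Module.Injective R ↥(P i)) (hind : iSupIndep P) (F : Finset ι') :
    Module.Injective R ↥(⨆ i ∈ F, P i) := by
  classical
  induction F using Finset.induction with
  | empty =>
    have h : (⊥ : Submodule R Q) = ⨆ i ∈ (∅ : Finset ι'), P i := by simp
    haveI : Subsingleton ↥(⊥ : Submodule R Q) := by
      constructor
      rintro ⟨a, ha⟩ ⟨b, hb⟩
      rw [Submodule.mem_bot] at ha hb
      simp [ha, hb]
    exact injective_of_equiv (LinearEquiv.ofEq _ _ h) injective_of_subsingleton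
  | @insert a F ha ih =>
    have h : P a ⊔ (⨆ i ∈ F, P i) = ⨆ i ∈ insert a F, P i := by
      rw [Finset.iSup_insert]
    have hdisj : P a ⊓ (⨆ i ∈ F, P i) = ⊥ := by
      rw [← disjoint_iff]
      have h2 : (⨆ i ∈ F, P i) = ⨆ i ∈ (↑F : Set ι'), P i := by
        simp only [Finset.mem_coe]
      rw [h2]
      exact hind.disjoint_biSup (by simpa using ha)
    exact injective_of_equiv (LinearEquiv.ofEq _ _ h) (injective_sup' (hP a) ih hdisj)

end Ambient

section Internal

variable {R : Type u} [Ring R] {Q : Type v} [AddCommGroup Q] [Module R Q]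
variable {ι' : Type v} [DecidableEq ι'] (p : ι' → Submodule R Q) (dec : DirectSum.IsInternal p)

/-- The equivalence given by an internal direct sum decomposition. -/
noncomputable def decEquiv : (⨁ i, ↥(p i)) ≃ₗ[R] Q :=
  LinearEquiv.ofBijective (DirectSum.toModule R ι' Q (fun i => (p i).subtype)) dec

/-- Component projections of an internal direct sum decomposition. -/
noncomputable def comp (i : ι') : Q →ₗ[R] ↥(p i) :=
  (DirectSum.component R ι' (fun i => ↥(p i)) i) ∘ₗ ((decEquiv p dec).symm.toLinearMap)

theorem comp_apply (i : ι') (x : Q) :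
    comp p dec i x
      = DirectSum.component R ι' (fun i => ↥(p i)) i ((decEquiv p dec).symm x) := rfl

theorem decEquiv_lof (i : ι') (m : ↥(p i)) :
    decEquiv p dec (DirectSum.lof R ι' (fun i => ↥(p i)) i m) = (m : Q) := by
  show DirectSum.toModule R ι' Q (fun i => (p i).subtype) _ = _
  rw [DirectSum.toModule_lof]
  rfl

theorem decEquiv_symm_coe (i : ι') (m : ↥(p i)) :
    (decEquiv p dec).symm (m : Q) = DirectSum.lof R ι' (fun i => ↥(p i)) i m := by
  rw [← decEquiv_lof p dec i m, LinearEquiv.symm_apply_apply]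

theorem comp_coe_self (i : ι') (m : ↥(p i)) : comp p dec i (m : Q) = m := by
  rw [comp_apply, decEquiv_symm_coe p dec i m, DirectSum.component.of, dif_pos rfl]

theorem comp_coe_ne {i j : ι'} (hij : j ≠ i) (m : ↥(p j)) : comp p dec i (m : Q) = 0 := by
  rw [comp_apply, decEquiv_symm_coe p dec j m, DirectSum.component.of, dif_neg hij]

theorem decEquiv_symm_subtype (i : ι') (m : ↥(p i)) :
    (decEquiv p dec).symm ((p i).subtype m) = DirectSum.lof R ι' (fun i => ↥(p i)) i m :=
  decEquiv_symm_coe p dec i m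

theorem comp_repr (x : Q) :
    ∃ F : Finset ι', x = ∑ i ∈ F, ((comp p dec i x : Q)) := by
  classical
  refine ⟨DFinsupp.support ((decEquiv p dec).symm x), ?_⟩
  conv_lhs => rw [← (decEquiv p dec).apply_symm_apply x]
  set a := (decEquiv p dec).symm x with ha
  conv_lhs => rw [← DirectSum.sum_support_of a]
  rw [map_sum]
  refine Finset.sum_congr rfl fun i _ => ?_
  rw [← DirectSum.lof_eq_of R, decEquiv_lof]
  rfl

theorem comp_zero_eq_zero {x : Q} (h : ∀ i, comp p dec i x = 0) : x = 0 := by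
  obtain ⟨F, hF⟩ := comp_repr p dec x
  rw [hF]
  refine Finset.sum_eq_zero fun i _ => ?_
  rw [h i, Submodule.coe_zero]

theorem mem_biSup_of_comp {S : Set ι'} {x : Q} (h : ∀ i ∉ S, comp p dec i x = 0) :
    x ∈ ⨆ i ∈ S, p i := by
  obtain ⟨F, hF⟩ := comp_repr p dec x
  rw [hF]
  refine Submodule.sum_mem _ fun i _ => ?_
  by_cases hi : i ∈ S
  · exact Submodule.mem_iSup_of_mem i (Submodule.mem_iSup_of_mem hi (comp p dec i x).2)
  · rw [h i hi, Submodule.coe_zero]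
    exact Submodule.zero_mem _

theorem comp_eq_zero_of_mem_biSup {S : Set ι'} {x : Q} (hx : x ∈ ⨆ i ∈ S, p i)
    {i₀ : ι'} (hi₀ : i₀ ∉ S) : comp p dec i₀ x = 0 := by
  have hle : (⨆ i ∈ S, p i) ≤ LinearMap.ker (comp p dec i₀) := by
    refine iSup₂_le fun i hi => ?_
    intro z hz
    rw [LinearMap.mem_ker, show z = ((⟨z, hz⟩ : ↥(p i)) : Q) from rfl]
    exact comp_coe_ne p dec (fun h => hi₀ (by rw [← h]; exact hi)) _
  exact LinearMap.mem_ker.mp (hle hx)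

include dec in
theorem biSup_disjoint {S S' : Set ι'} (hSS : ∀ i, i ∈ S → i ∉ S') :
    (⨆ i ∈ S, p i) ⊓ (⨆ i ∈ S', p i) = ⊥ := by
  rw [eq_bot_iff]
  intro x hx
  obtain ⟨h1, h2⟩ := Submodule.mem_inf.mp hx
  rw [Submodule.mem_bot]
  refine comp_zero_eq_zero p dec fun i => ?_
  by_cases hi : i ∈ S
  · exact comp_eq_zero_of_mem_biSup p dec h2 (hSS i hi)
  · exact comp_eq_zero_of_mem_biSup p dec h1 hi

/-- The linear filtration map onto the coordinates in `C`. -/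
noncomputable def filterMap (C : Set ι') [DecidablePred (· ∈ C)] : Q →ₗ[R] Q :=
  (DirectSum.toModule R ι' Q (fun i => if i ∈ C then (p i).subtype else 0)) ∘ₗ
    ((decEquiv p dec).symm.toLinearMap)

theorem filterMap_apply (C : Set ι') [DecidablePred (· ∈ C)] (x : Q) :
    filterMap p dec C x = (DirectSum.toModule R ι' Q (fun i => if i ∈ C then (p i).subtype else 0))
      ((decEquiv p dec).symm x) := rfl

theorem filterMap_mem (C : Set ι') [DecidablePred (· ∈ C)] (x : Q) :
    filterMap p dec C x ∈ ⨆ i ∈ C, p i := by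
  rw [filterMap_apply]
  generalize (decEquiv p dec).symm x = a
  induction a using DirectSum.induction_on with
  | zero => rw [map_zero]; exact Submodule.zero_mem _
  | of i m =>
    rw [← DirectSum.lof_eq_of R, DirectSum.toModule_lof]
    by_cases hi : i ∈ C
    · rw [if_pos hi]
      exact Submodule.mem_iSup_of_mem i (Submodule.mem_iSup_of_mem hi m.2)
    · rw [if_neg hi]
      exact Submodule.zero_mem _
  | add a b hb hc =>
    rw [map_add]
    exact Submodule.add_mem _ hb hc

theorem comp_filterMap_aux (C : Set ι') [DecidablePred (· ∈ C)] {i : ι'} (hi : i ∈ C)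
    (a : ⨁ i, ↥(p i)) :
    DirectSum.component R ι' (fun i => ↥(p i)) i ((decEquiv p dec).symm
      ((DirectSum.toModule R ι' Q (fun i => if i ∈ C then (p i).subtype else 0)) a))
    = DirectSum.component R ι' (fun i => ↥(p i)) i a := by
  induction a using DirectSum.induction_on with
  | zero => simp
  | of j m =>
    rw [← DirectSum.lof_eq_of R, DirectSum.toModule_lof]
    by_cases hj : j ∈ C
    · rw [if_pos hj, decEquiv_symm_subtype p dec j m]
    · rw [if_neg hj, LinearMap.zero_apply, map_zero, map_zero,
        DirectSum.component.of, dif_neg (fun h => hj (by rw [h]; exact hi))]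
  | add a b hb hc =>
    rw [map_add, map_add, map_add, map_add, hb, hc]

theorem comp_filterMap (C : Set ι') [DecidablePred (· ∈ C)] {i : ι'} (hi : i ∈ C) (x : Q) :
    comp p dec i (filterMap p dec C x) = comp p dec i x := by
  rw [comp_apply, filterMap_apply, comp_filterMap_aux p dec C hi, comp_apply]

include dec in
theorem mem_biSup_finset {S : Set ι'} {x : Q} (hx : x ∈ ⨆ i ∈ S, p i) :
    ∃ Fs : Finset ι', (↑Fs : Set ι') ⊆ S ∧ x ∈ ⨆ i ∈ (↑Fs : Set ι'), p i := by
  classical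
  refine ⟨DFinsupp.support ((decEquiv p dec).symm x), ?_, ?_⟩
  · intro i hi
    rw [Finset.mem_coe, DFinsupp.mem_support_iff] at hi
    by_contra hiS
    exact hi (comp_eq_zero_of_mem_biSup p dec hx hiS)
  · refine mem_biSup_of_comp p dec (fun i hi => ?_)
    rw [Finset.mem_coe, DFinsupp.mem_support_iff, not_not] at hi
    exact hi

end Internal


theorem exists_nontrivial_finitelyInjective_of_not_sigmaInjective (R : Type u) [Ring R]
    (M : Type v) [AddCommGroup M] [Module R M] (hMinj : Module.Injective R M)
    (hM : ¬ SigmaInjective R M)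
    -- `E` is an injective hull of `M^(ℵ₀)`:
    (E : Type v) [AddCommGroup E] [Module R E] (hEinj : Module.Injective R E)
    (j : (⨁ _ : ℕ, M) →ₗ[R] E) (hj : Function.Injective j)
    (hess : ∀ P : Submodule R E, Disjoint P (LinearMap.range j) → P = ⊥) :
    ∃ N : Submodule R E, FinitelyInjective R N ∧ ¬ IsDirectSumOfInjectives R N := by
  classical
  by_contra hcon
  push_neg at hcon
  -- basic setup
  set A : Submodule R E := LinearMap.range j with hA
  have hAess : ∀ P : Submodule R E, P ⊓ A = ⊥ → P = ⊥ := fun P h => hess P (disjoint_iff.mpr h)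
  set Qn : ℕ → Submodule R E := fun n =>
    LinearMap.range (j ∘ₗ DirectSum.lof R ℕ (fun _ => M) n) with hQn
  have hQnA : ∀ n, Qn n ≤ A := fun n => LinearMap.range_comp_le_range _ _
  have hlofinj : ∀ n, Function.Injective (j ∘ₗ DirectSum.lof R ℕ (fun _ => M) n) := by
    intro n a b hab
    simp only [LinearMap.coe_comp, Function.comp_apply] at hab
    have h1 := hj hab
    have h2 := congrArg (DirectSum.component R ℕ (fun _ => M) n) h1
    rwa [DirectSum.component.lof_self, DirectSum.component.lof_self] at h2
  have hQninj : ∀ n, Module.Injective R ↥(Qn n) := fun n =>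
    injective_of_equiv (LinearEquiv.ofInjective _ (hlofinj n)) hMinj
  have hQind : iSupIndep Qn := by
    intro n
    rw [disjoint_iff, eq_bot_iff]
    intro x hx
    obtain ⟨hx1, hx2⟩ := Submodule.mem_inf.mp hx
    obtain ⟨v, rfl⟩ := hx1
    have hle : (⨆ m, ⨆ (_ : m ≠ n), Qn m)
        ≤ Submodule.map j (LinearMap.ker (DirectSum.component R ℕ (fun _ => M) n)) := by
      refine iSup₂_le fun m hm => ?_
      rintro _ ⟨w, rfl⟩
      exact ⟨DirectSum.lof R ℕ (fun _ => M) m w,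
        LinearMap.mem_ker.mpr (comp_lof_ne hm w), rfl⟩
    obtain ⟨z, hz, heq⟩ := hle hx2
    have h1 : z = DirectSum.lof R ℕ (fun _ => M) n v := hj heq
    have h2 : DirectSum.lof R ℕ (fun _ => M) n v
        ∈ LinearMap.ker (DirectSum.component R ℕ (fun _ => M) n) := h1 ▸ hz
    rw [LinearMap.mem_ker, DirectSum.component.lof_self] at h2
    simp only [Submodule.mem_bot, LinearMap.coe_comp, Function.comp_apply, h2, map_zero]
  have hAsupmem : ∀ x ∈ A, ∃ F : Finset ℕ, x ∈ ⨆ n ∈ F, Qn n := by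
    rintro _ ⟨a, rfl⟩
    refine ⟨DFinsupp.support a, ?_⟩
    have hrepr : j a = ∑ n ∈ DFinsupp.support a,
        j (DirectSum.lof R ℕ (fun _ => M) n (a n)) := by
      conv_lhs => rw [← DirectSum.sum_support_of a]
      rw [map_sum]
      rfl
    rw [hrepr]
    refine Submodule.sum_mem _ fun n hn => ?_
    exact Submodule.mem_iSup_of_mem n (Submodule.mem_iSup_of_mem hn ⟨a n, rfl⟩)
  -- the E-level finite injectivity predicate
  have hFIA : ∀ s : Finset E, (∀ x ∈ s, x ∈ A) →
      ∃ L : Submodule R E, L ≤ A ∧ Module.Injective R ↥L ∧ ∀ x ∈ s, x ∈ L := by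
    intro s hs
    have hx : ∀ x ∈ s, ∃ F : Finset ℕ, x ∈ ⨆ n ∈ F, Qn n := fun x hx => hAsupmem x (hs x hx)
    choose Ffun hFfun using hx
    set Fbig : Finset ℕ := s.attach.biUnion (fun x => Ffun x.1 x.2) with hFbigdef
    refine ⟨⨆ n ∈ Fbig, Qn n, iSup₂_le fun n _ => hQnA n,
      injective_biSup_finset Qn hQninj hQind Fbig, ?_⟩
    intro x hx
    have hsub : Ffun x hx ⊆ Fbig :=
      Finset.subset_biUnion_of_mem (fun (x : {x // x ∈ s}) => Ffun x.1 x.2)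
        (Finset.mem_attach s ⟨x, hx⟩)
    exact (biSup_mono (f := Qn) (fun i hi => hsub hi)) (hFfun x hx)
  -- conversion from the `E`-level predicate to `FinitelyInjective`
  have hFIE2FI : ∀ N : Submodule R E,
      (∀ s : Finset E, (∀ x ∈ s, x ∈ N) →
        ∃ L : Submodule R E, L ≤ N ∧ Module.Injective R ↥L ∧ ∀ x ∈ s, x ∈ L) →
      FinitelyInjective R ↥N := by
    intro N hN s
    obtain ⟨L, hLN, hLinj, hLmem⟩ := hN (s.image Subtype.val) (by
      intro x hx
      obtain ⟨z, _, rfl⟩ := Finset.mem_image.mp hx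
      exact z.2)
    refine ⟨L.comap N.subtype,
      injective_of_equiv (Submodule.comapSubtypeEquivOfLe hLN).symm hLinj, ?_⟩
    intro x hx
    exact hLmem _ (Finset.mem_image_of_mem Subtype.val hx)
  -- Case: `A = ⊤` is impossible
  by_cases hAtop : A = ⊤
  · refine hM ?_
    have hjsurj : Function.Surjective j := LinearMap.range_eq_top.mp hAtop
    have e : (⨁ _ : ℕ, M) ≃ₗ[R] E := LinearEquiv.ofBijective j ⟨hj, hjsurj⟩
    exact sigmaInjective_of_countable hMinj (injective_of_equiv e.symm hEinj)
  obtain ⟨x₀, -, hx₀⟩ := SetLike.exists_of_lt (lt_top_iff_ne_top.mpr hAtop : A < ⊤)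
  -- Zorn: a maximal finitely injective submodule containing `A` avoiding `x₀`
  set 𝒮 : Set (Submodule R E) := {N | A ≤ N ∧ x₀ ∉ N ∧
    (∀ s : Finset E, (∀ x ∈ s, x ∈ N) →
      ∃ L : Submodule R E, L ≤ N ∧ Module.Injective R ↥L ∧ ∀ x ∈ s, x ∈ L)} with h𝒮
  have hA𝒮 : A ∈ 𝒮 := ⟨le_rfl, hx₀, hFIA⟩
  have hch : ∀ c ⊆ 𝒮, IsChain (· ≤ ·) c → ∀ y ∈ c, ∃ ub ∈ 𝒮, ∀ z ∈ c, z ≤ ub := by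
    intro c hcs hchain y hy
    obtain ⟨U, hub, hmem⟩ := chain_ub hchain ⟨y, hy⟩
    have hone : ∀ t : Finset E, (∀ x ∈ t, x ∈ U) → ∃ N ∈ c, ∀ x ∈ t, x ∈ N := by
      intro t
      induction t using Finset.induction with
      | empty => exact fun _ => ⟨y, hy, by simp⟩
      | @insert a t' ha ih =>
        intro hts
        obtain ⟨N₁, hN₁, hN₁mem⟩ := ih (fun x hx => hts x (Finset.mem_insert_of_mem hx))
        obtain ⟨N₂, hN₂, haN₂⟩ := hmem a (hts a (Finset.mem_insert_self a t'))
        rcases hchain.total hN₁ hN₂ with h | h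
        · refine ⟨N₂, hN₂, fun x hx => ?_⟩
          rcases Finset.mem_insert.mp hx with rfl | hx
          · exact haN₂
          · exact h (hN₁mem x hx)
        · refine ⟨N₁, hN₁, fun x hx => ?_⟩
          rcases Finset.mem_insert.mp hx with rfl | hx
          · exact h haN₂
          · exact hN₁mem x hx
    refine ⟨U, ⟨(hcs hy).1.trans (hub y hy), ?_, ?_⟩, hub⟩
    · intro hx₀U
      obtain ⟨N, hNs, hx₀N⟩ := hmem x₀ hx₀U
      exact (hcs hNs).2.1 hx₀N
    · intro s hs
      obtain ⟨N, hNc, hsN⟩ := hone s hs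
      obtain ⟨L, hLN, hLinj, hLmem⟩ := (hcs hNc).2.2 s hsN
      exact ⟨L, hLN.trans (hub N hNc), hLinj, hLmem⟩
  obtain ⟨Nstar, -, hmax⟩ := zorn_le_nonempty₀ 𝒮 hch A hA𝒮
  obtain ⟨hANs, hx₀Ns, hFIN⟩ := hmax.prop
  -- `Nstar` is not injective
  have hNsinj : ¬ Module.Injective R ↥Nstar := by
    intro hinj
    obtain ⟨π, hπ⟩ := hinj.out Nstar.subtype Nstar.injective_subtype LinearMap.id
    have hker : LinearMap.ker π ⊓ A = ⊥ := by
      rw [eq_bot_iff]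
      intro x hx
      obtain ⟨h1, h2⟩ := Submodule.mem_inf.mp hx
      have h3 : x ∈ Nstar := hANs h2
      have h4 : π x = ⟨x, h3⟩ := hπ ⟨x, h3⟩
      rw [LinearMap.mem_ker] at h1
      rw [Submodule.mem_bot]
      have h5 : (0 : ↥Nstar) = ⟨x, h3⟩ := h1 ▸ h4
      have h6 := congrArg Subtype.val h5.symm
      simpa using h6
    have hkerbot := hAess _ hker
    refine hx₀Ns ?_
    have h5 : x₀ - ((π x₀ : ↥Nstar) : E) ∈ LinearMap.ker π := by
      rw [LinearMap.mem_ker, map_sub]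
      have h6 : π ((π x₀ : ↥Nstar) : E) = π x₀ := hπ (π x₀)
      rw [h6, sub_self]
    rw [hkerbot, Submodule.mem_bot, sub_eq_zero] at h5
    rw [h5]
    exact (π x₀).2
  -- `Nstar` is a direct sum of injectives
  obtain ⟨ι', hdecEq, p, hpinj, hpint⟩ := hcon Nstar (hFIE2FI Nstar hFIN)
  letI := hdecEq
  -- a failing cyclic-extension test for `Nstar`
  have hNCE : ¬ CycExt R ↥Nstar := fun h => hNsinj (CycExt.injective h)
  rw [CycExt] at hNCE
  push_neg at hNCE
  obtain ⟨Y, iY1, iY2, y, W, hW, η, hηfail⟩ := hNCE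
  letI := iY1
  letI := iY2
  set T : Set ι' := {i | (comp p hpint i) ∘ₗ η ≠ 0} with hT
  have hTfin : ∀ F : Finset ι', ¬ (T ⊆ ↑F) := by
    intro F hTF
    have hmemL : ∀ w : ↥W, η w ∈ ⨆ i ∈ (↑F : Set ι'), p i := by
      intro w
      refine mem_biSup_of_comp p hpint fun i hi => ?_
      have hiT : i ∉ T := fun h => hi (hTF h)
      have hzero : (comp p hpint i) ∘ₗ η = 0 := not_not.mp hiT
      simpa using LinearMap.congr_fun hzero w
    have hLinj : Module.Injective R ↥(⨆ i ∈ (↑F : Set ι'), p i) := by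
      have h1 : (⨆ i ∈ F, p i) = ⨆ i ∈ (↑F : Set ι'), p i := by simp only [Finset.mem_coe]
      exact injective_of_equiv (LinearEquiv.ofEq _ _ h1)
        (injective_biSup_finset p hpinj hpint.submodule_iSupIndep F)
    obtain ⟨β₀, hβ₀⟩ := hLinj.out (Submodule.inclusion hW) (Submodule.inclusion_injective hW)
      (LinearMap.codRestrict _ η hmemL)
    obtain ⟨w, hw, hne⟩ := hηfail ((⨆ i ∈ (↑F : Set ι'), p i).subtype ∘ₗ β₀)
    apply hne
    have h2 : Submodule.inclusion hW (⟨w, hw⟩ : ↥W) = ⟨w, hW hw⟩ := rfl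
    calc ((⨆ i ∈ (↑F : Set ι'), p i).subtype ∘ₗ β₀) ⟨w, hW hw⟩
        = (⨆ i ∈ (↑F : Set ι'), p i).subtype (β₀ (Submodule.inclusion hW ⟨w, hw⟩)) := by
          rw [h2]; rfl
      _ = (⨆ i ∈ (↑F : Set ι'), p i).subtype
            ((LinearMap.codRestrict _ η hmemL) ⟨w, hw⟩) := by rw [hβ₀]
      _ = η ⟨w, hw⟩ := rfl
  have hTinf : T.Infinite := by
    by_contra h
    rw [Set.not_infinite] at h
    exact hTfin h.toFinset (by simp [Set.Finite.coe_toFinset])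
  -- hereditary badness
  have hbad : ∀ C : Set ι', C ⊆ T → C.Infinite →
      ¬ Module.Injective R ↥(⨆ i ∈ C, p i) := by
    intro C hCT hCinf hCinj
    obtain ⟨β₀, hβ₀⟩ := hCinj.out (Submodule.inclusion hW) (Submodule.inclusion_injective hW)
      (LinearMap.codRestrict _ ((filterMap p hpint C) ∘ₗ η)
        (fun w => filterMap_mem p hpint C (η w)))
    set cstar : ↥Nstar :=
      (⨆ i ∈ C, p i).subtype (β₀ ⟨y, Submodule.mem_span_singleton_self y⟩) with hcstar
    have hKfin : {i : ι' | comp p hpint i cstar ≠ 0}.Finite := by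
      refine Set.Finite.subset (DFinsupp.support ((decEquiv p hpint).symm cstar)).finite_toSet ?_
      intro i hi
      rw [Finset.mem_coe, DFinsupp.mem_support_iff]
      exact hi
    obtain ⟨istar, histar⟩ := (hCinf.diff hKfin).nonempty
    have histarT : (comp p hpint istar) ∘ₗ η ≠ 0 := hCT histar.1
    apply histarT
    ext w
    simp only [LinearMap.coe_comp, Function.comp_apply, LinearMap.zero_apply]
    have h1 : comp p hpint istar (η w) = comp p hpint istar (filterMap p hpint C (η w)) :=
      (comp_filterMap p hpint C histar.1 (η w)).symm
    have h2 : filterMap p hpint C (η w)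
        = (⨆ i ∈ C, p i).subtype (β₀ (Submodule.inclusion hW w)) := by
      rw [hβ₀ w]
      rfl
    obtain ⟨r, hr⟩ := Submodule.mem_span_singleton.mp (hW w.2)
    have hwr : Submodule.inclusion hW w
        = r • (⟨y, Submodule.mem_span_singleton_self y⟩ : ↥(Submodule.span R {y})) :=
      Subtype.ext (by simpa using hr.symm)
    have h3 : comp p hpint istar cstar = 0 := by
      have := histar.2
      simp only [Set.mem_setOf_eq, not_not] at this
      exact this
    rw [h1, h2, hwr, map_smul, map_smul, ← hcstar, map_smul, h3, smul_zero]
  -- split `T` into two infinite halves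
  obtain e := hTinf.natEmbedding
  set C₁ : Set ι' := Set.range (fun k => ((e (2 * k) : ↥T) : ι')) with hC₁
  set C₂ : Set ι' := Set.range (fun k => ((e (2 * k + 1) : ↥T) : ι')) with hC₂
  have hC₁T : C₁ ⊆ T := by rintro _ ⟨k, rfl⟩; exact (e (2 * k)).2
  have hC₂T : C₂ ⊆ T := by rintro _ ⟨k, rfl⟩; exact (e (2 * k + 1)).2
  have hC₁inf : C₁.Infinite := Set.infinite_range_of_injective (by
    intro a b hab
    have := e.injective (Subtype.ext hab)
    omega)
  have hC₂inf : C₂.Infinite := Set.infinite_range_of_injective (by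
    intro a b hab
    have := e.injective (Subtype.ext hab)
    omega)
  have hC₂sub : C₂ ⊆ C₁ᶜ := by
    rintro _ ⟨k, rfl⟩ ⟨l, hl⟩
    have := e.injective (Subtype.ext hl)
    omega
  -- the two halves at the level of `E`
  set B₁ : Submodule R E := (⨆ i ∈ C₁, p i).map Nstar.subtype with hB₁
  set B₂ : Submodule R E := (⨆ i ∈ C₁ᶜ, p i).map Nstar.subtype with hB₂
  have hB₁Ns : B₁ ≤ Nstar := Submodule.map_subtype_le _ _
  have hB₂Ns : B₂ ≤ Nstar := Submodule.map_subtype_le _ _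
  have hB₁B₂sup : B₁ ⊔ B₂ = Nstar := by
    rw [hB₁, hB₂, ← Submodule.map_sup]
    have h1 : (⨆ i ∈ C₁, p i) ⊔ (⨆ i ∈ C₁ᶜ, p i) = ⊤ := by
      rw [← iSup_union, Set.union_compl_self]
      simpa using hpint.submodule_iSup_eq_top
    rw [h1, Submodule.map_top, Submodule.range_subtype]
  have hB₁B₂ : B₁ ⊓ B₂ = ⊥ := by
    rw [hB₁, hB₂, ← Submodule.map_inf _ Nstar.injective_subtype,
      biSup_disjoint p hpint (fun i hi hic => ((Set.mem_compl_iff _ _).mp hic) hi),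
      Submodule.map_bot]
  -- both halves are non-injective
  have hSupInj : ∀ F : Finset ι',
      Module.Injective R ↥((⨆ i ∈ (↑F : Set ι'), p i).map Nstar.subtype) := by
    intro F
    have h1 : (⨆ i ∈ F, p i) = ⨆ i ∈ (↑F : Set ι'), p i := by simp only [Finset.mem_coe]
    refine injective_of_equiv (Submodule.equivMapOfInjective _ Nstar.injective_subtype _) ?_
    exact injective_of_equiv (LinearEquiv.ofEq _ _ h1)
      (injective_biSup_finset p hpinj hpint.submodule_iSupIndep F)
  have hB₁bad : ¬ Module.Injective R ↥B₁ := by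
    intro h
    refine hbad C₁ hC₁T hC₁inf ?_
    exact injective_of_equiv
      (Submodule.equivMapOfInjective Nstar.subtype Nstar.injective_subtype _).symm h
  have hB₂bad : ¬ Module.Injective R ↥B₂ := by
    intro h
    refine hbad C₂ hC₂T hC₂inf ?_
    set U : Submodule R E := (⨆ i ∈ C₂, p i).map Nstar.subtype with hU
    set V : Submodule R E := (⨆ i ∈ (C₁ᶜ \ C₂), p i).map Nstar.subtype with hV
    have hUV : U ⊓ V = ⊥ := by
      rw [hU, hV, ← Submodule.map_inf _ Nstar.injective_subtype,
        biSup_disjoint p hpint (fun i hi hic => hic.2 hi), Submodule.map_bot]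
    have hUVsup : U ⊔ V = B₂ := by
      rw [hU, hV, ← Submodule.map_sup, ← iSup_union, Set.union_diff_cancel hC₂sub]
    have hc := isCompl_comap hUV hUVsup
    have hUinj : Module.Injective R ↥(U.comap B₂.subtype) :=
      injective_of_isCompl h hc
    have e1 : ↥(U.comap B₂.subtype) ≃ₗ[R] ↥U :=
      Submodule.comapSubtypeEquivOfLe (hUVsup ▸ (le_sup_left : U ≤ U ⊔ V))
    have e2 : ↥(⨆ i ∈ C₂, p i) ≃ₗ[R] ↥U :=
      Submodule.equivMapOfInjective Nstar.subtype Nstar.injective_subtype _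
    exact injective_of_equiv (e1.trans e2.symm) hUinj
  -- outer hull of `B₁` and a complement containing `B₂`
  obtain ⟨H₁, hEss₁, hClos₁⟩ := exists_maxEss (Q := E) B₁
  have hB₂H₁ : B₂ ⊓ H₁ = ⊥ := by
    refine Ess.disj hEss₁ (inf_le_right : B₂ ⊓ H₁ ≤ H₁) ?_
    rw [eq_bot_iff]
    intro x hx
    obtain ⟨⟨h1, h2⟩, h3⟩ := Submodule.mem_inf.mp hx
    rw [← hB₁B₂, Submodule.mem_inf]
    exact ⟨h3, h1⟩
  obtain ⟨CC, hB₂CC, hH₁CC, hCCmax⟩ := exists_maxDisjoint H₁ B₂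
    (by rw [inf_comm]; exact hB₂H₁)
  have hcompl₁ : IsCompl H₁ CC := closure_isCompl hEinj H₁ CC hClos₁ hH₁CC hCCmax
  have hH₁inj : Module.Injective R ↥H₁ := injective_of_isCompl hEinj hcompl₁
  have hCCinj : Module.Injective R ↥CC := injective_of_isCompl hEinj hcompl₁.symm
  -- inner hull of `B₂` inside the complement `CC`
  set B₂' : Submodule R ↥CC := B₂.comap CC.subtype with hB₂'
  obtain ⟨H₂', hEss₂', hClos₂'⟩ := exists_maxEss (Q := ↥CC) B₂'
  obtain ⟨D₂', _, hH₂D₂', hD₂max'⟩ := exists_maxDisjoint H₂' (⊥ : Submodule R ↥CC)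
    (by simp)
  have hcompl₂ : IsCompl H₂' D₂' := closure_isCompl hCCinj H₂' D₂' hClos₂' hH₂D₂' hD₂max'
  have hH₂'inj : Module.Injective R ↥H₂' := injective_of_isCompl hCCinj hcompl₂
  set H₂ : Submodule R E := H₂'.map CC.subtype with hH₂
  have hH₂CC : H₂ ≤ CC := Submodule.map_subtype_le _ _
  have hH₂inj : Module.Injective R ↥H₂ :=
    injective_of_equiv (Submodule.equivMapOfInjective CC.subtype CC.injective_subtype H₂')
      hH₂'inj
  have hB₂H₂ : B₂ ≤ H₂ := by
    intro x hx
    have hxCC : x ∈ CC := hB₂CC hx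
    have h1 : (⟨x, hxCC⟩ : ↥CC) ∈ B₂' := hx
    exact ⟨⟨x, hxCC⟩, hEss₂'.le h1, rfl⟩
  have hEssB₂H₂ : Ess B₂ H₂ := by
    refine ⟨hB₂H₂, ?_⟩
    rintro _ ⟨z', hz', rfl⟩ hz0
    obtain ⟨r, hr1, hr2⟩ := hEss₂'.2 z' hz' (fun h => hz0 (by rw [h]; rfl))
    refine ⟨r, ?_, ?_⟩
    · have h2 : CC.subtype (r • z') ∈ B₂ := hr1
      simpa using h2
    · intro hc
      refine hr2 (Subtype.ext ?_)
      simpa using hc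
  have hB₁H₂ : B₁ ⊓ H₂ = ⊥ := by
    refine Ess.disj hEssB₂H₂ (inf_le_right : B₁ ⊓ H₂ ≤ H₂) ?_
    rw [eq_bot_iff]
    intro x hx
    obtain ⟨⟨h1, h2⟩, h3⟩ := Submodule.mem_inf.mp hx
    rw [← hB₁B₂, Submodule.mem_inf]
    exact ⟨h1, h3⟩
  -- properness of the hulls
  have hB₁H₁ne : B₁ ≠ H₁ := fun h => hB₁bad (by rw [h]; exact hH₁inj)
  have hB₂H₂ne : B₂ ≠ H₂ := fun h => hB₂bad (by rw [h]; exact hH₂inj)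
  -- finite injectivity of the two enlarged modules
  have hFIN'₁ : ∀ s : Finset E, (∀ x ∈ s, x ∈ B₂ ⊔ H₁) →
      ∃ L : Submodule R E, L ≤ B₂ ⊔ H₁ ∧ Module.Injective R ↥L ∧ ∀ x ∈ s, x ∈ L := by
    intro s hs
    have hx : ∀ x ∈ s, ∃ Fs : Finset ι', (↑Fs : Set ι') ⊆ C₁ᶜ ∧
        x ∈ ((⨆ i ∈ (↑Fs : Set ι'), p i).map Nstar.subtype) ⊔ H₁ := by
      intro x hxs
      obtain ⟨b, hb, h, hh, rfl⟩ := Submodule.mem_sup.mp (hs x hxs)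
      obtain ⟨b', hb', rfl⟩ := hb
      obtain ⟨Fs, hFsub, hFmem⟩ := mem_biSup_finset p hpint hb'
      exact ⟨Fs, hFsub, Submodule.mem_sup.mpr
        ⟨_, Submodule.mem_map_of_mem hFmem, h, hh, rfl⟩⟩
    choose Ffun hF1 hF2 using hx
    set Fbig : Finset ι' := s.attach.biUnion (fun x => Ffun x.1 x.2) with hFbig
    set SF : Submodule R E := (⨆ i ∈ (↑Fbig : Set ι'), p i).map Nstar.subtype with hSF
    have hSFB₂ : SF ≤ B₂ := by
      refine Submodule.map_mono (biSup_mono ?_)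
      intro i hi
      obtain ⟨x, -, hmem⟩ := Finset.mem_biUnion.mp hi
      exact hF1 x.1 x.2 hmem
    have hSFH₁ : SF ⊓ H₁ = ⊥ := by
      rw [eq_bot_iff]
      intro z hz
      obtain ⟨h1, h2⟩ := Submodule.mem_inf.mp hz
      rw [← hB₂H₁, Submodule.mem_inf]
      exact ⟨hSFB₂ h1, h2⟩
    refine ⟨SF ⊔ H₁, sup_le_sup_right hSFB₂ H₁, injective_sup' (hSupInj Fbig) hH₁inj hSFH₁, ?_⟩
    intro x hxs
    refine sup_le_sup (Submodule.map_mono (biSup_mono ?_)) (le_refl H₁) (hF2 x hxs)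
    intro i hi
    rw [Finset.mem_coe] at hi ⊢
    exact Finset.mem_biUnion.mpr ⟨⟨x, hxs⟩, Finset.mem_attach _ _, hi⟩
  have hFIN'₂ : ∀ s : Finset E, (∀ x ∈ s, x ∈ B₁ ⊔ H₂) →
      ∃ L : Submodule R E, L ≤ B₁ ⊔ H₂ ∧ Module.Injective R ↥L ∧ ∀ x ∈ s, x ∈ L := by
    intro s hs
    have hx : ∀ x ∈ s, ∃ Fs : Finset ι', (↑Fs : Set ι') ⊆ C₁ ∧
        x ∈ ((⨆ i ∈ (↑Fs : Set ι'), p i).map Nstar.subtype) ⊔ H₂ := by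
      intro x hxs
      obtain ⟨b, hb, h, hh, rfl⟩ := Submodule.mem_sup.mp (hs x hxs)
      obtain ⟨b', hb', rfl⟩ := hb
      obtain ⟨Fs, hFsub, hFmem⟩ := mem_biSup_finset p hpint hb'
      exact ⟨Fs, hFsub, Submodule.mem_sup.mpr
        ⟨_, Submodule.mem_map_of_mem hFmem, h, hh, rfl⟩⟩
    choose Ffun hF1 hF2 using hx
    set Fbig : Finset ι' := s.attach.biUnion (fun x => Ffun x.1 x.2) with hFbig
    set SF : Submodule R E := (⨆ i ∈ (↑Fbig : Set ι'), p i).map Nstar.subtype with hSF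
    have hSFB₁ : SF ≤ B₁ := by
      refine Submodule.map_mono (biSup_mono ?_)
      intro i hi
      obtain ⟨x, -, hmem⟩ := Finset.mem_biUnion.mp hi
      exact hF1 x.1 x.2 hmem
    have hSFH₂ : SF ⊓ H₂ = ⊥ := by
      rw [eq_bot_iff]
      intro z hz
      obtain ⟨h1, h2⟩ := Submodule.mem_inf.mp hz
      rw [← hB₁H₂, Submodule.mem_inf]
      exact ⟨hSFB₁ h1, h2⟩
    refine ⟨SF ⊔ H₂, sup_le_sup_right hSFB₁ H₂, injective_sup' (hSupInj Fbig) hH₂inj hSFH₂, ?_⟩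
    intro x hxs
    refine sup_le_sup (Submodule.map_mono (biSup_mono ?_)) (le_refl H₂) (hF2 x hxs)
    intro i hi
    rw [Finset.mem_coe] at hi ⊢
    exact Finset.mem_biUnion.mpr ⟨⟨x, hxs⟩, Finset.mem_attach _ _, hi⟩
  -- maximality forces `x₀` to lie in both enlargements
  have hup₁ : Nstar ≤ B₂ ⊔ H₁ := by
    rw [← hB₁B₂sup]
    rw [sup_comm]
    exact sup_le_sup_left hEss₁.le B₂
  have hup₂ : Nstar ≤ B₁ ⊔ H₂ := by
    rw [← hB₁B₂sup]
    exact sup_le_sup_left hB₂H₂ B₁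
  have hx₀1 : x₀ ∈ B₂ ⊔ H₁ := by
    by_contra hx
    have hmem𝒮 : (B₂ ⊔ H₁) ∈ 𝒮 := ⟨hANs.trans hup₁, hx, hFIN'₁⟩
    have heq : B₂ ⊔ H₁ = Nstar := le_antisymm (hmax.le_of_ge hmem𝒮 hup₁) hup₁
    have hH₁B₁ : H₁ ≤ B₁ := by
      intro h hh
      have h1 : h ∈ B₁ ⊔ B₂ := hB₁B₂sup ▸ (heq ▸ (le_sup_right : H₁ ≤ B₂ ⊔ H₁)) hh
      obtain ⟨b₁, hb₁, b₂, hb₂, hsum⟩ := Submodule.mem_sup.mp h1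
      have h2 : b₂ ∈ H₁ := by
        have h3 : h - b₁ ∈ H₁ := Submodule.sub_mem H₁ hh (hEss₁.le hb₁)
        have h4 : b₂ = h - b₁ := by rw [← hsum]; abel
        rwa [h4]
      have h5 : b₂ ∈ B₂ ⊓ H₁ := Submodule.mem_inf.mpr ⟨hb₂, h2⟩
      rw [hB₂H₁, Submodule.mem_bot] at h5
      rw [← hsum, h5, add_zero]
      exact hb₁
    exact hB₁H₁ne (le_antisymm hEss₁.le hH₁B₁)
  have hx₀2 : x₀ ∈ B₁ ⊔ H₂ := by
    by_contra hx
    have hmem𝒮 : (B₁ ⊔ H₂) ∈ 𝒮 := ⟨hANs.trans hup₂, hx, hFIN'₂⟩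
    have heq : B₁ ⊔ H₂ = Nstar := le_antisymm (hmax.le_of_ge hmem𝒮 hup₂) hup₂
    have hH₂B₂ : H₂ ≤ B₂ := by
      intro h hh
      have h1 : h ∈ B₁ ⊔ B₂ := hB₁B₂sup ▸ (heq ▸ (le_sup_right : H₂ ≤ B₁ ⊔ H₂)) hh
      obtain ⟨b₁, hb₁, b₂, hb₂, hsum⟩ := Submodule.mem_sup.mp h1
      have h2 : b₁ ∈ CC := by
        have h3 : h - b₂ ∈ CC := Submodule.sub_mem CC (hH₂CC hh) (hB₂CC hb₂)
        have h4 : b₁ = h - b₂ := by rw [← hsum]; abel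
        rwa [h4]
      have h5 : b₁ ∈ H₁ ⊓ CC := Submodule.mem_inf.mpr ⟨hEss₁.le hb₁, h2⟩
      rw [disjoint_iff.mp hcompl₁.disjoint, Submodule.mem_bot] at h5
      rw [← hsum, h5, zero_add]
      exact hb₂
    exact hB₂H₂ne (le_antisymm hB₂H₂ hH₂B₂)
  -- the final contradiction
  obtain ⟨b₂, hb₂, h₁, hh₁, hxeq1⟩ := Submodule.mem_sup.mp hx₀1
  obtain ⟨b₁, hb₁, h₂, hh₂, hxeq2⟩ := Submodule.mem_sup.mp hx₀2
  have hdiff : h₁ - b₁ = h₂ - b₂ := by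
    have h0 : b₂ + h₁ = b₁ + h₂ := hxeq1.trans hxeq2.symm
    have := congrArg (fun z => z - b₁ - b₂) h0
    simpa using by
      rw [show h₁ - b₁ = b₂ + h₁ - b₁ - b₂ by abel, h0]
      abel
  have hmemH₁ : h₁ - b₁ ∈ H₁ := Submodule.sub_mem H₁ hh₁ (hEss₁.le hb₁)
  have hmemCC : h₁ - b₁ ∈ CC := by
    rw [hdiff]
    exact Submodule.sub_mem CC (hH₂CC hh₂) (hB₂CC hb₂)
  have hzero : h₁ - b₁ = 0 := by
    have h5 : h₁ - b₁ ∈ H₁ ⊓ CC := Submodule.mem_inf.mpr ⟨hmemH₁, hmemCC⟩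
    rwa [disjoint_iff.mp hcompl₁.disjoint, Submodule.mem_bot] at h5
  have h₁b₁ : h₁ = b₁ := by rwa [sub_eq_zero] at hzero
  refine hx₀Ns ?_
  rw [← hB₁B₂sup]
  refine Submodule.mem_sup.mpr ⟨b₁, hb₁, b₂, hb₂, ?_⟩
  rw [← hxeq1, h₁b₁]
  abel
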